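/- There exists a subset S of the E_6 root system containing exactly one root from each antipodal pair such that the sum of the vectors in S is the zero vector. -/

import Mathlib

/-- The root system `E_6` realized in `ℝ^6`: the union of a copy of `D_5`
(in the span of `ε_1, …, ε_5`) and
`E_6^b = {(√3/2) c_6 ε_6 + (1/2)∑_{i=1}^5 c_i ε_i : c_i ∈ {±1}, ∏ c_i = -1}`. -/
def rootsE6 : Set (Fin 6 → ℝ) :=
  {v | ∃ i j : Fin 5, i < j ∧
    (v = Pi.single (Fin.castSucc i) 1 + Pi.single (Fin.castSucc j) (1 : ℝ) ∨
     v = Pi.single (Fin.castSucc i) 1 - Pi.single (Fin.castSucc j) (1 : ℝ) ∨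
     v = -(Pi.single (Fin.castSucc i) 1 + Pi.single (Fin.castSucc j) (1 : ℝ)) ∨
     v = -(Pi.single (Fin.castSucc i) 1 - Pi.single (Fin.castSucc j) (1 : ℝ)))} ∪
  {v | ∃ c : Fin 6 → ℝ, (∀ i, c i = 1 ∨ c i = -1) ∧ (∏ i, c i) = -1 ∧
    v = (Real.sqrt 3 / 2 * c (Fin.last 5)) • (Pi.single (Fin.last 5) (1 : ℝ) : Fin 6 → ℝ) +
        (1 / 2 : ℝ) • ∑ i : Fin 5, c (Fin.castSucc i) • (Pi.single (Fin.castSucc i) (1 : ℝ) : Fin 6 → ℝ)}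


namespace E6y
noncomputable def sgn (x : Bool) : ℝ := if x then 1 else -1
@[simp] lemma sgn_true : sgn true = 1 := rfl
@[simp] lemma sgn_false : sgn false = -1 := rfl
@[simp] lemma sgn_not (x : Bool) : sgn (!x) = -sgn x := by cases x <;> simp [sgn]
lemma sgn_ne_zero (x : Bool) : sgn x ≠ 0 := by cases x <;> norm_num [sgn]
lemma sgn_inj {x y : Bool} (h : sgn x = sgn y) : x = y := by
  cases x <;> cases y <;> simp_all [sgn] <;> norm_num at h
abbrev B6 := Bool × Bool × Bool × Bool × Bool × Bool
def bf (p : B6) : Fin 6 → Bool := ![p.1, p.2.1, p.2.2.1, p.2.2.2.1, p.2.2.2.2.1, p.2.2.2.2.2]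
abbrev P := ((Fin 5 × Fin 5) × Bool × Bool) ⊕ B6
noncomputable def φ : P → (Fin 6 → ℝ)
  | .inl ((i,j),t,s) => sgn s • ((Pi.single (Fin.castSucc i) (1:ℝ) : Fin 6 → ℝ) + sgn t • (Pi.single (Fin.castSucc j) (1:ℝ) : Fin 6 → ℝ))
  | .inr p => (Real.sqrt 3 / 2 * sgn (bf p (Fin.last 5))) • (Pi.single (Fin.last 5) (1:ℝ) : Fin 6 → ℝ) +
      (1/2 : ℝ) • ∑ i : Fin 5, sgn (bf p (Fin.castSucc i)) • (Pi.single (Fin.castSucc i) (1:ℝ) : Fin 6 → ℝ)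
def negP : P → P
  | .inl ((i,j),t,s) => .inl ((i,j),t,!s)
  | .inr (a,b,c,d,e,f) => .inr (!a,!b,!c,!d,!e,!f)

lemma five_ne_cs (i : Fin 5) : (5 : Fin 6) ≠ Fin.castSucc i := (Fin.castSucc_lt_last i).ne'
lemma cs_ne_five (i : Fin 5) : Fin.castSucc i ≠ (5 : Fin 6) := (Fin.castSucc_lt_last i).ne

lemma phi_inl_last (i j : Fin 5) (t s : Bool) : φ (.inl ((i,j),t,s)) (Fin.last 5) = 0 := by
  simp [φ, Pi.single_apply, (Fin.castSucc_lt_last i).ne', (Fin.castSucc_lt_last j).ne',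
    five_ne_cs]

lemma phi_inl_cast (i j : Fin 5) (t s : Bool) (m : Fin 5) :
    φ (.inl ((i,j),t,s)) (Fin.castSucc m)
      = sgn s * ((if m = i then 1 else 0) + sgn t * (if m = j then 1 else 0)) := by
  simp [φ, Pi.single_apply, Fin.castSucc_inj]

lemma phi_inr_last (p : B6) : φ (.inr p) (Fin.last 5) = Real.sqrt 3 / 2 * sgn (bf p (Fin.last 5)) := by
  simp [φ, Pi.single_apply, (Fin.castSucc_lt_last _).ne, Finset.sum_apply, five_ne_cs]

lemma phi_inr_cast (p : B6) (m : Fin 5) :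
    φ (.inr p) (Fin.castSucc m) = 1/2 * sgn (bf p (Fin.castSucc m)) := by
  simp [φ, Pi.single_apply, Fin.castSucc_inj, (Fin.castSucc_lt_last m).ne, Finset.sum_apply,
    Finset.sum_ite_eq, cs_ne_five]

@[simp] lemma bf_last (p : B6) : bf p (Fin.last 5) = p.2.2.2.2.2 := rfl
@[simp] lemma bf_0 (p : B6) : bf p (0 : Fin 6) = p.1 := rfl
@[simp] lemma bf_1 (p : B6) : bf p (1 : Fin 6) = p.2.1 := rfl
@[simp] lemma bf_c0 (p : B6) : bf p (Fin.castSucc 0) = p.1 := rfl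
@[simp] lemma bf_c1 (p : B6) : bf p (Fin.castSucc 1) = p.2.1 := rfl
@[simp] lemma bf_c2 (p : B6) : bf p (Fin.castSucc 2) = p.2.2.1 := rfl
@[simp] lemma bf_c3 (p : B6) : bf p (Fin.castSucc 3) = p.2.2.2.1 := rfl
@[simp] lemma bf_c4 (p : B6) : bf p (Fin.castSucc 4) = p.2.2.2.2.1 := rfl
@[simp] lemma bf_2 (p : B6) : bf p (2 : Fin 6) = p.2.2.1 := rfl
@[simp] lemma bf_3 (p : B6) : bf p (3 : Fin 6) = p.2.2.2.1 := rfl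
@[simp] lemma bf_4 (p : B6) : bf p (4 : Fin 6) = p.2.2.2.2.1 := rfl
@[simp] lemma bf_5 (p : B6) : bf p (5 : Fin 6) = p.2.2.2.2.2 := rfl

lemma phi_neg (p : P) : φ (negP p) = -φ p := by
  rcases p with ⟨⟨i,j⟩,t,s⟩ | ⟨a,b,c,d,e,f⟩
  · simp [φ, negP]; module
  · show φ (Sum.inr (!a,!b,!c,!d,!e,!f)) = _
    funext k
    rw [show ((-φ (Sum.inr (a,b,c,d,e,f))) k) = -(φ (Sum.inr (a,b,c,d,e,f)) k) from rfl]
    induction k using Fin.lastCases with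
    | last => rw [phi_inr_last, phi_inr_last]; simp; try ring
    | cast m =>
        rw [phi_inr_cast, phi_inr_cast]
        fin_cases m <;> simp <;> try ring

def validb : P → Bool
  | .inl ((i,j),_,_) => decide (i < j)
  | .inr p => xor p.1 (xor p.2.1 (xor p.2.2.1 (xor p.2.2.2.1 (xor p.2.2.2.2.1 p.2.2.2.2.2))))

lemma inj_phi {p q : P} (hp : validb p = true) (hq : validb q = true) (h : φ p = φ q) : p = q := by
  rcases p with ⟨⟨i,j⟩,t,s⟩ | a <;> rcases q with ⟨⟨i',j'⟩,t',s'⟩ | a'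
  · -- inl inl
    have hij : i < j := by simpa [validb] using hp
    have hij' : i' < j' := by simpa [validb] using hq
    have e : ∀ m : Fin 5, sgn s * ((if m = i then 1 else 0) + sgn t * (if m = j then 1 else 0))
        = sgn s' * ((if m = i' then 1 else 0) + sgn t' * (if m = j' then 1 else 0)) := by
      intro m
      rw [← phi_inl_cast i j t s m, ← phi_inl_cast i' j' t' s' m, h]
    have hii : i = i' := by
      rcases eq_or_ne i i' with h1 | h1
      · exact h1
      exfalso
      rcases eq_or_ne i j' with h2 | h2
      · have hlt : i' < i := lt_of_lt_of_eq hij' h2.symm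
        have e' := e i'
        simp [hlt.ne, (hlt.trans hij).ne, hij'.ne] at e'
        first
        | exact sgn_ne_zero s' e'.symm
        | exact sgn_ne_zero s' e'
      · have e' := e i
        simp [hij.ne, h1, h2] at e'
        exact sgn_ne_zero s e'
    subst hii
    have hjj : j = j' := by
      have e' := e j
      rcases eq_or_ne j j' with h1 | h1
      · exact h1
      simp [hij.ne', h1, (hij' : i < j').ne'] at e'
      exact (e'.elim (sgn_ne_zero s) (sgn_ne_zero t)).elim
    subst hjj
    have hs : s = s' := by
      have e' := e i
      simp [hij.ne] at e'
      exact sgn_inj e'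
    subst hs
    have ht : t = t' := by
      have e' := e j
      simp [hij.ne'] at e'
      rcases e' with e' | e'
      · exact sgn_inj e'
      · exact absurd e' (sgn_ne_zero s)
    rw [ht]
  · exfalso
    have := congrFun h (Fin.last 5)
    rw [phi_inl_last, phi_inr_last] at this
    have h3 : Real.sqrt 3 ≠ 0 := by positivity
    exact (mul_ne_zero (by positivity) (sgn_ne_zero _)) this.symm
  · exfalso
    have := congrFun h (Fin.last 5)
    rw [phi_inl_last, phi_inr_last] at this
    exact (mul_ne_zero (by positivity) (sgn_ne_zero _)) this
  · have ec : ∀ m : Fin 5, bf a (Fin.castSucc m) = bf a' (Fin.castSucc m) := by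
      intro m
      have := congrFun h (Fin.castSucc m)
      rw [phi_inr_cast, phi_inr_cast] at this
      exact sgn_inj (by linarith)
    have el : bf a (Fin.last 5) = bf a' (Fin.last 5) := by
      have := congrFun h (Fin.last 5)
      rw [phi_inr_last, phi_inr_last] at this
      have h3 : (0:ℝ) < Real.sqrt 3 / 2 := by positivity
      exact sgn_inj (mul_left_cancel₀ h3.ne' this)
    obtain ⟨a1,a2,a3,a4,a5,a6⟩ := a
    obtain ⟨b1,b2,b3,b4,b5,b6⟩ := a'
    have h0 := ec 0; have h1 := ec 1; have h2 := ec 2; have h3 := ec 3; have h4 := ec 4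
    simp at h0 h1 h2 h3 h4 el
    simp [h0, h1, h2, h3, h4, el]

lemma prod_sgn (p : B6) :
    (∏ i, sgn (bf p i)) = if validb (.inr p) then -1 else 1 := by
  obtain ⟨a,b,c,d,e,f⟩ := p
  rw [Fin.prod_univ_six]
  have h2 : ((2:Fin 6)) = Fin.castSucc 2 := rfl
  have h3 : ((3:Fin 6)) = Fin.castSucc 3 := rfl
  have h4 : ((4:Fin 6)) = Fin.castSucc 4 := rfl
  have h5 : ((5:Fin 6)) = Fin.last 5 := rfl
  rw [h2, h3, h4, h5]
  simp only [bf_0, bf_1, bf_c2, bf_c3, bf_c4, bf_last]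
  cases a <;> cases b <;> cases c <;> cases d <;> cases e <;> cases f <;>
    simp [validb] <;> norm_num

lemma mem_roots (p : P) (hp : validb p = true) : φ p ∈ rootsE6 := by
  rcases p with ⟨⟨i,j⟩,t,s⟩ | q
  · left
    refine ⟨i, j, by simpa [validb] using hp, ?_⟩
    cases t <;> cases s
    · right; right; right; simp [φ] <;> module
    · right; left; simp [φ] <;> module
    · right; right; left; simp [φ] <;> module
    · left; simp [φ] <;> module
  · right
    refine ⟨fun i => sgn (bf q i), fun i => by cases h : bf q i <;> simp [h], ?_, rfl⟩
    rw [prod_sgn, hp, if_pos rfl]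

lemma roots_repr (v : Fin 6 → ℝ) (hv : v ∈ rootsE6) : ∃ p, validb p = true ∧ φ p = v := by
  rcases hv with ⟨i, j, hij, hc⟩ | ⟨c, hc1, hc2, rfl⟩
  · have hv : ∀ t s : Bool, validb (.inl ((i,j),t,s)) = true := by
      intro t s; simpa [validb] using hij
    rcases hc with rfl | rfl | rfl | rfl
    · exact ⟨.inl ((i,j),true,true), hv _ _, by simp [φ]⟩
    · exact ⟨.inl ((i,j),false,true), hv _ _, by simp [φ] <;> module⟩
    · exact ⟨.inl ((i,j),true,false), hv _ _, by simp [φ] <;> module⟩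
    · exact ⟨.inl ((i,j),false,false), hv _ _, by simp [φ] <;> module⟩
  · have hb : ∀ i, ∃ x : Bool, c i = sgn x := by
      intro i
      rcases hc1 i with h | h
      · exact ⟨true, by simp [h]⟩
      · exact ⟨false, by simp [h]⟩
    choose b hb' using hb
    refine ⟨.inr (b 0, b 1, b 2, b 3, b 4, b 5), ?_, ?_⟩
    · have hbf : ∀ i, bf (b 0, b 1, b 2, b 3, b 4, b 5) i = b i := by
        intro i; fin_cases i <;> rfl
      have : (∏ i, sgn (bf (b 0, b 1, b 2, b 3, b 4, b 5) i)) = -1 := by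
        rw [← hc2]
        exact Finset.prod_congr rfl fun i _ => by rw [hbf, ← hb']
      rw [prod_sgn] at this
      by_contra hcon
      rw [if_neg (by simpa using hcon)] at this
      norm_num at this
    · have hbf : ∀ i, bf (b 0, b 1, b 2, b 3, b 4, b 5) i = b i := by
        intro i; fin_cases i <;> rfl
      show _ = _
      simp only [φ, hbf, ← hb']

def chooseA (i j : Fin 5) (t : Bool) : Bool :=
  if (i,j) = (0,1) ∨ (i,j) = (1,2) ∨ (i,j) = (2,3) ∨ (i,j) = (3,4) then true
  else if (i,j) = (0,4) then t
  else if (i,j) = (0,2) ∨ (i,j) = (1,3) ∨ (i,j) = (2,4) then false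
  else !t

def selb : P → Bool
  | .inl ((i,j),t,s) => decide (i < j) && (s == chooseA i j t)
  | .inr p => validb (.inr p) && (xor p.1 (xor p.2.1 p.2.2.1))

set_option maxRecDepth 100000

lemma sumA : ∑ p : (Fin 5 × Fin 5) × Bool × Bool,
    (if selb (.inl p) = true then φ (.inl p) else 0) = 0 := by
  simp only [Fintype.sum_prod_type, Fintype.sum_bool, Fin.sum_univ_five]
  simp +decide only [if_true, if_false]
  simp only [φ, sgn_true, sgn_false]
  module

lemma sumB : ∑ p : B6, (if selb (.inr p) = true then φ (.inr p) else 0) = 0 := by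
  simp only [Fintype.sum_prod_type, Fintype.sum_bool]
  simp +decide only [if_true, if_false]
  simp only [φ, Fin.sum_univ_five, bf_last, bf_c0, bf_c1, bf_c2, bf_c3, bf_c4,
    sgn_true, sgn_false]
  module

lemma selb_valid : ∀ p : P, selb p = true → validb p = true := by decide
lemma valid_neg : ∀ p : P, validb p = true → validb (negP p) = true := by decide
lemma sel_flip : ∀ p : P, validb p = true → (selb p = true ↔ ¬ selb (negP p) = true) := by decide

theorem stmt_10' :
    ∃ S : Finset (Fin 6 → ℝ),
      (∀ v ∈ S, v ∈ rootsE6) ∧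
      (∀ v ∈ rootsE6, (v ∈ S ↔ -v ∉ S)) ∧
      ∑ v ∈ S, v = 0 := by
  classical
  refine ⟨(Finset.univ.filter (fun p : P => selb p = true)).image φ, ?_, ?_, ?_⟩
  · intro v hv
    obtain ⟨p, hp, rfl⟩ := Finset.mem_image.mp hv
    exact mem_roots p (selb_valid p (Finset.mem_filter.mp hp).2)
  · intro v hv
    obtain ⟨p, hp, rfl⟩ := roots_repr v hv
    have key : ∀ q : P, validb q = true →
        (φ q ∈ (Finset.univ.filter (fun p : P => selb p = true)).image φ ↔ selb q = true) := by
      intro q hq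
      constructor
      · intro h
        obtain ⟨q', hq', hqq⟩ := Finset.mem_image.mp h
        have := inj_phi (selb_valid q' (Finset.mem_filter.mp hq').2) hq hqq
        rw [← this]
        exact (Finset.mem_filter.mp hq').2
      · intro h
        exact Finset.mem_image.mpr ⟨q, Finset.mem_filter.mpr ⟨Finset.mem_univ q, h⟩, rfl⟩
    rw [key p hp, ← phi_neg p, key (negP p) (valid_neg p hp)]
    exact sel_flip p hp
  · rw [Finset.sum_image (fun p hp q hq h =>
      inj_phi (selb_valid p (Finset.mem_filter.mp hp).2) (selb_valid q (Finset.mem_filter.mp hq).2) h)]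
    rw [Finset.sum_filter, Fintype.sum_sum_type]
    rw [sumA, sumB, add_zero]

end E6y

/-- There is a choice of one root from each antipodal pair of `E_6` whose sum
is zero. -/
theorem stmt_10 :
    ∃ S : Finset (Fin 6 → ℝ),
      (∀ v ∈ S, v ∈ rootsE6) ∧
      (∀ v ∈ rootsE6, (v ∈ S ↔ -v ∉ S)) ∧
      ∑ v ∈ S, v = 0 := by
  exact E6y.stmt_10'
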